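/- Let g ∈ ℝ, let v be a non-negative integer, and let P : ℝ → ℝ be a polynomial function satisfying the Laguerre differential equation t·P''(t) + (g + 1/2 − t)·P'(t) + v·P(t) = 0 for all t ∈ ℝ. Define φ̃(x) := e^{x²/2} · x^g · P(−x²) for x ∈ (0, ∞). Then for all x ∈ (0, ∞): −φ̃''(x) + ( x² + g(g−1)/x² − 1 − 2g )·φ̃(x) = −4(g + v + 1/2)·φ̃(x). -/

import Mathlib

open Real Set Filter

theorem stmt_18 (g : ℝ) (v : ℕ) (P : ℝ → ℝ)
    (hpoly : ∃ p : Polynomial ℝ, P = fun t => p.eval t)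
    (hode : ∀ t : ℝ,
      t * deriv (deriv P) t + (g + 1 / 2 - t) * deriv P t + (v : ℝ) * P t = 0) :
    ∀ x ∈ Set.Ioi (0 : ℝ),
      -(deriv (deriv (fun y => Real.exp (y ^ 2 / 2) * y ^ g * P (-(y ^ 2)))) x)
        + (x ^ 2 + g * (g - 1) / x ^ 2 - 1 - 2 * g)
          * (Real.exp (x ^ 2 / 2) * x ^ g * P (-(x ^ 2)))
      = -4 * (g + (v : ℝ) + 1 / 2) * (Real.exp (x ^ 2 / 2) * x ^ g * P (-(x ^ 2))) := by
  obtain ⟨p, rfl⟩ := hpoly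
  set P : ℝ → ℝ := fun t => p.eval t with hP
  set Q : ℝ → ℝ := fun t => (Polynomial.derivative p).eval t with hQdef
  set R : ℝ → ℝ := fun t => (Polynomial.derivative (Polynomial.derivative p)).eval t with hRdef
  have hQ : deriv P = Q := by funext t; simp [hP, hQdef, Polynomial.deriv]
  have hR : deriv Q = R := by funext t; simp [hQdef, hRdef, Polynomial.deriv]
  have hode' : ∀ t : ℝ, t * R t + (g + 1 / 2 - t) * Q t + (v : ℝ) * P t = 0 := by
    intro t
    have := hode t
    rwa [hQ, hR] at this
  have hP1 : ∀ t : ℝ, HasDerivAt P (Q t) t := fun t => p.hasDerivAt t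
  have hQ1 : ∀ t : ℝ, HasDerivAt Q (R t) t := fun t => (Polynomial.derivative p).hasDerivAt t
  set F : ℝ → ℝ := fun y => Real.exp (y ^ 2 / 2) *
      (y ^ (g + 1) * P (-(y ^ 2)) + g * (y ^ (g - 1) * P (-(y ^ 2)))
        - 2 * (y ^ (g + 1) * Q (-(y ^ 2)))) with hFdef
  intro x hx
  have hx0 : (0 : ℝ) < x := hx
  -- basic derivative building blocks at a point y > 0
  have hE : ∀ y : ℝ, HasDerivAt (fun z : ℝ => Real.exp (z ^ 2 / 2))
      (Real.exp (y ^ 2 / 2) * y) y := by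
    intro y
    have h0 : HasDerivAt (fun z : ℝ => z ^ 2 / 2) y y := by
      have := (hasDerivAt_pow 2 y).div_const 2
      refine this.congr_deriv ?_
      symm
      push_cast
      ring
    simpa using h0.exp
  have hC : ∀ y : ℝ, HasDerivAt (fun z : ℝ => P (-(z ^ 2))) (Q (-(y ^ 2)) * (-(2 * y))) y := by
    intro y
    have hin : HasDerivAt (fun z : ℝ => -(z ^ 2)) (-(2 * y)) y := by
      have := (hasDerivAt_pow 2 y).neg
      refine this.congr_deriv ?_
      symm
      push_cast; ring
    have := (hP1 (-(y ^ 2))).comp y hin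
    exact this
  have hC' : ∀ y : ℝ, HasDerivAt (fun z : ℝ => Q (-(z ^ 2))) (R (-(y ^ 2)) * (-(2 * y))) y := by
    intro y
    have hin : HasDerivAt (fun z : ℝ => -(z ^ 2)) (-(2 * y)) y := by
      have := (hasDerivAt_pow 2 y).neg
      refine this.congr_deriv ?_
      symm
      push_cast; ring
    have := (hQ1 (-(y ^ 2))).comp y hin
    exact this
  -- first derivative
  have hderiv1 : ∀ y ∈ Ioi (0 : ℝ), HasDerivAt
      (fun y => Real.exp (y ^ 2 / 2) * y ^ g * P (-(y ^ 2))) (F y) y := by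
    intro y hy
    have hy0 : (0 : ℝ) < y := hy
    have hB : HasDerivAt (fun z : ℝ => z ^ g) (g * y ^ (g - 1)) y :=
      Real.hasDerivAt_rpow_const (Or.inl hy0.ne')
    have h := ((hE y).mul hB).mul (hC y)
    refine h.congr_deriv ?_
    symm
    have e3 : y ^ (g + 1) = y ^ g * y := Real.rpow_add_one hy0.ne' g
    rw [hFdef]
    simp only [Pi.mul_apply]
    rw [e3]
    ring
  -- second derivative of φ equals derivative of F at x
  have hF' : HasDerivAt F
      ((Real.exp (x ^ 2 / 2) * x) *
        (x ^ (g + 1) * P (-(x ^ 2)) + g * (x ^ (g - 1) * P (-(x ^ 2)))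
          - 2 * (x ^ (g + 1) * Q (-(x ^ 2))))
       + Real.exp (x ^ 2 / 2) *
        (((g + 1) * x ^ g * P (-(x ^ 2)) + x ^ (g + 1) * (Q (-(x ^ 2)) * (-(2 * x))))
          + g * ((g - 1) * x ^ (g - 2) * P (-(x ^ 2)) + x ^ (g - 1) * (Q (-(x ^ 2)) * (-(2 * x))))
          - 2 * ((g + 1) * x ^ g * Q (-(x ^ 2)) + x ^ (g + 1) * (R (-(x ^ 2)) * (-(2 * x)))))) x := by
    have hB1 : HasDerivAt (fun z : ℝ => z ^ (g + 1)) ((g + 1) * x ^ g) x := by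
      have := Real.hasDerivAt_rpow_const (x := x) (p := g + 1) (Or.inl hx0.ne')
      convert this using 2
      ring
    have hBm : HasDerivAt (fun z : ℝ => z ^ (g - 1)) ((g - 1) * x ^ (g - 2)) x := by
      have := Real.hasDerivAt_rpow_const (x := x) (p := g - 1) (Or.inl hx0.ne')
      convert this using 2
      ring
    have T1 := hB1.mul (hC x)
    have T2 := (hBm.mul (hC x)).const_mul g
    have T3 := (hB1.mul (hC' x)).const_mul 2
    have hG := (T1.add T2).sub T3
    have := (hE x).mul hG
    exact this
  have hev : deriv (fun y => Real.exp (y ^ 2 / 2) * y ^ g * P (-(y ^ 2))) =ᶠ[nhds x] F := by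
    filter_upwards [Ioi_mem_nhds hx0] with y hy using (hderiv1 y hy).deriv
  have h2nd : deriv (deriv (fun y => Real.exp (y ^ 2 / 2) * y ^ g * P (-(y ^ 2)))) x
      = deriv F x := hev.deriv_eq
  rw [h2nd, hF'.deriv]
  -- algebra
  have e1 : x ^ (g - 1) = x ^ (g - 2) * x := by
    have := Real.rpow_add_one hx0.ne' (g - 2)
    rw [show g - 2 + 1 = g - 1 by ring] at this
    exact this
  have e2 : x ^ g = x ^ (g - 1) * x := by
    have := Real.rpow_add_one hx0.ne' (g - 1)
    rw [show g - 1 + 1 = g by ring] at this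
    exact this
  have e3 : x ^ (g + 1) = x ^ g * x := Real.rpow_add_one hx0.ne' g
  rw [e3, e2, e1]
  have hodet := hode' (-(x ^ 2))
  set E := Real.exp (x ^ 2 / 2)
  set b := x ^ (g - 2)
  set p0 := P (-(x ^ 2))
  set q0 := Q (-(x ^ 2))
  set r0 := R (-(x ^ 2))
  clear_value E b p0 q0 r0
  field_simp
  have H : E * g * b * x ^ 4 * q0 * 4 + E * b * x ^ 4 * p0 * (v:ℝ) * 4 + E * b * x ^ 4 * q0 * 2 +
      (E * b * x ^ 6 * q0 * 4 - E * b * x ^ 6 * r0 * 4) = 0 := by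
    linear_combination (4*b*x^4*E)*hodet
  linear_combination (8*E*b*x^2)*hodet
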